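/- arXiv:2201.00850 — 5 statements merged into one kernel-verified Lean document; each statement's English description precedes it below -/
import Mathlib

section
/- Let h_i : ℝ^n → ℝ^n, i = 1,…,K, be piecewise-affine functions with pieces h_i(c) = F^i_{λ_i} c + f^i_{λ_i} on polyhedra Ψ_{λ_i} covering ℝ^n (Λ_i finite), and define F̄_i as the entrywise maximum of the matrices {|F^i_{λ_i}|}_{λ_i ∈ Λ_i}. Let W ∈ ℝ^{n'×n'}, W_1^i ∈ ℝ^{n'×n}, W_2^i ∈ ℝ^{n×n'} be arbitrary matrices, m ∈ ℝ^{n'} with m > 0, and τ > 0. If the spectral radius satisfies ρ(|W| + Σ_{i=1}^K |W_1^i| F̄_i |W_2^i|) < 1, then for all constant vectors c̄_1,…,c̄_K and c, the dynamics τ ẋ = −x + [W x + Σ_{i=1}^K W_1^i h_i(W_2^i x + c̄_i) + c]_0^m has a unique equilibrium and is globally exponentially stable to it. -/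
open Matrix

noncomputable section

/-- componentwise clamping of `x` to the box `[0, m]` -/
def clamp {ι : Type*} (m x : ι → ℝ) : ι → ℝ := fun k => min (max (x k) 0) (m k)

/-- entrywise absolute value of a matrix -/
def eAbs {α β : Type*} (A : Matrix α β ℝ) : Matrix α β ℝ := Matrix.of fun k l => |A k l|

/-- spectral radius of a real matrix: the largest modulus of its (complex) spectrum -/
def specRad {ι : Type*} [Fintype ι] [DecidableEq ι] (A : Matrix ι ι ℝ) : ℝ :=
  sSup ((fun z : ℂ => ‖z‖) '' spectrum ℂ (A.map (fun a : ℝ => (a : ℂ))))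

/-! ### Auxiliary lemmas -/

section SpectralAux

open Filter

attribute [local instance] Matrix.linftyOpNormedAddCommGroup Matrix.linftyOpNormedRing
  Matrix.linftyOpNormedAlgebra

lemma aux_specRadius_lt_one {ι : Type*} [Fintype ι] [DecidableEq ι] (A : Matrix ι ι ℝ)
    (hρ : specRad A < 1) : spectralRadius ℂ (A.map (fun a : ℝ => (a : ℂ))) < 1 := by
  set B := A.map (fun a : ℝ => (a : ℂ)) with hB
  have hbdd : BddAbove ((fun z : ℂ => ‖z‖) '' spectrum ℂ B) := by
    obtain ⟨r, hr⟩ := (spectrum.isBounded (𝕜 := ℂ) B).subset_closedBall 0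
    refine ⟨r, ?_⟩
    rintro _ ⟨z, hz, rfl⟩
    have := hr hz
    simp only [Metric.mem_closedBall, Complex.dist_eq, sub_zero] at this
    simpa using this
  have key : ∀ z ∈ spectrum ℂ B, (‖z‖₊ : ENNReal) ≤ ENNReal.ofReal (specRad A) := by
    intro z hz
    have h1 : ‖z‖ ≤ specRad A := le_csSup hbdd ⟨z, hz, rfl⟩
    have h2 : (‖z‖₊ : ENNReal) = ENNReal.ofReal ‖z‖ := by
      rw [ENNReal.ofReal, Real.toNNReal, ← norm_toNNReal]
      congr 1
    rw [h2]
    exact ENNReal.ofReal_le_ofReal (by simpa using h1)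
  have hle : spectralRadius ℂ B ≤ ENNReal.ofReal (specRad A) := by
    rw [spectralRadius]; exact iSup₂_le key
  calc spectralRadius ℂ B ≤ ENNReal.ofReal (specRad A) := hle
    _ < 1 := by rw [← ENNReal.ofReal_one]; exact (ENNReal.ofReal_lt_ofReal_iff (by norm_num)).2 hρ

lemma aux_norm_map_complex {ι κ : Type*} [Fintype ι] [Fintype κ] (M : Matrix ι κ ℝ) :
    ‖M.map (fun a : ℝ => (a : ℂ))‖₊ = ‖M‖₊ := by
  simp only [Matrix.linfty_opNNNorm_def, Matrix.map_apply, Complex.nnnorm_real]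

lemma aux_exists_pow_norm_lt_one {ι : Type*} [Fintype ι] [DecidableEq ι] (A : Matrix ι ι ℝ)
    (hρ : specRad A < 1) : ∃ N : ℕ, 1 ≤ N ∧ ‖A ^ N‖ < 1 := by
  set B := A.map (fun a : ℝ => (a : ℂ)) with hB
  have hlim := spectrum.pow_nnnorm_pow_one_div_tendsto_nhds_spectralRadius B
  have hlt := aux_specRadius_lt_one A hρ
  have hev : ∀ᶠ N : ℕ in atTop, (‖B ^ N‖₊ : ENNReal) ^ (1 / (N:ℝ)) < 1 :=
    hlim.eventually_lt_const hlt
  obtain ⟨N, hN, hN1⟩ := (hev.and (eventually_ge_atTop 1)).exists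
  refine ⟨N, hN1, ?_⟩
  have hpow : (‖B ^ N‖₊ : ENNReal) < 1 := by
    have hexp : (0:ℝ) < 1 / (N:ℝ) := by positivity
    by_contra hc
    push_neg at hc
    exact absurd (ENNReal.one_le_rpow hc hexp) (not_le.mpr hN)
  have hBN : B ^ N = (A ^ N).map (fun a : ℝ => (a : ℂ)) := by
    rw [hB]
    exact (map_pow (Complex.ofRealHom.mapMatrix) A N).symm
  have : ‖A ^ N‖₊ < 1 := by
    rw [← aux_norm_map_complex (A ^ N), ← hBN]
    exact_mod_cast hpow
  exact_mod_cast this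

/-- From `specRad A < 1` and entrywise nonnegativity of `A`, produce a positive weight
vector `v ≥ 1` and a contraction factor `κ < 1` with `A v ≤ κ v` entrywise. -/
lemma aux_exists_weight_vec {n' : ℕ} (A : Matrix (Fin n') (Fin n') ℝ)
    (hA0 : ∀ a b, 0 ≤ A a b) (hρ : specRad A < 1) :
    ∃ v : Fin n' → ℝ, (∀ k, 1 ≤ v k) ∧
      ∃ κ : ℝ, 0 < κ ∧ κ < 1 ∧ ∀ k, (A *ᵥ v) k ≤ κ * v k := by
  obtain ⟨N, hN1, hAN⟩ := aux_exists_pow_norm_lt_one A hρ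
  -- entrywise nonnegativity of powers
  have hpow0 : ∀ (p : ℕ) (a b : Fin n'), 0 ≤ (A ^ p) a b := by
    intro p
    induction p with
    | zero => intro a b; by_cases hab : a = b <;> simp [pow_zero, Matrix.one_apply, hab]
    | succ p ih =>
      intro a b
      rw [pow_succ, Matrix.mul_apply]
      exact Finset.sum_nonneg fun j _ => mul_nonneg (ih a j) (hA0 j b)
  set one : Fin n' → ℝ := fun _ => 1 with hone
  set v : Fin n' → ℝ := ∑ p ∈ Finset.range N, (A ^ p) *ᵥ one with hv
  have hmulVec_nonneg : ∀ (p : ℕ) (k : Fin n'), 0 ≤ ((A ^ p) *ᵥ one) k := by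
    intro p k
    simp only [Matrix.mulVec, dotProduct, hone]
    exact Finset.sum_nonneg fun j _ => by simpa using hpow0 p k j
  have hv1 : ∀ k, 1 ≤ v k := by
    intro k
    have h0 : ((A ^ 0) *ᵥ one) k = 1 := by simp [hone]
    calc (1:ℝ) = ((A ^ 0) *ᵥ one) k := h0.symm
      _ ≤ v k := by
          rw [hv, Finset.sum_apply]
          exact Finset.single_le_sum (f := fun p => ((A ^ p) *ᵥ one) k)
            (fun p _ => hmulVec_nonneg p k) (Finset.mem_range.mpr (by omega))
  -- row sums of A^N are < 1
  have hrow : ∀ k, ((A ^ N) *ᵥ one) k ≤ ‖A ^ N‖ := by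
    intro k
    have h1 : ‖((A ^ N) *ᵥ one) k‖ ≤ ‖(A ^ N) *ᵥ one‖ := norm_le_pi_norm _ k
    have h2 : ‖(A ^ N) *ᵥ one‖ ≤ ‖A ^ N‖ * ‖one‖ := Matrix.linfty_opNorm_mulVec _ _
    have h3 : ‖one‖ ≤ 1 := by
      rcases isEmpty_or_nonempty (Fin n') with hem | hne
      · simp [Pi.norm_def]
      · apply (pi_norm_le_iff_of_nonneg (by norm_num)).2
        intro i; simp [hone]
    have h4 : ((A ^ N) *ᵥ one) k ≤ ‖((A ^ N) *ᵥ one) k‖ := le_abs_self _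
    nlinarith [norm_nonneg (A ^ N), norm_nonneg ((A ^ N) *ᵥ one)]
  set η : ℝ := ‖A ^ N‖ with hη
  have hη0 : 0 ≤ η := norm_nonneg _
  -- A v ≤ v - (1 - η)
  have hAv : ∀ k, (A *ᵥ v) k ≤ v k - (1 - η) := by
    intro k
    have hshift : A *ᵥ v = v - one + (A ^ N) *ᵥ one := by
      have hsum : A *ᵥ (∑ p ∈ Finset.range N, (A ^ p) *ᵥ one)
          = ∑ p ∈ Finset.range N, A *ᵥ ((A ^ p) *ᵥ one) := by
        have := map_sum A.mulVecLin (fun p => (A ^ p) *ᵥ one) (Finset.range N)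
        simp only [Matrix.mulVecLin_apply] at this
        exact this
      rw [hv, hsum]
      have h1 : ∀ p, A *ᵥ ((A ^ p) *ᵥ one) = (A ^ (p + 1)) *ᵥ one := by
        intro p
        rw [Matrix.mulVec_mulVec, ← pow_succ']
      have h2 : ∑ p ∈ Finset.range N, A *ᵥ ((A ^ p) *ᵥ one)
          = ∑ p ∈ Finset.range N, (A ^ (p + 1)) *ᵥ one := by
        exact Finset.sum_congr rfl fun p _ => h1 p
      rw [h2]
      have h3 : ∑ p ∈ Finset.range (N + 1), (A ^ p) *ᵥ one
          = (∑ p ∈ Finset.range N, (A ^ (p+1)) *ᵥ one) + (A ^ 0) *ᵥ one :=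
        Finset.sum_range_succ' _ N
      have h4 : ∑ p ∈ Finset.range (N + 1), (A ^ p) *ᵥ one
          = (∑ p ∈ Finset.range N, (A ^ p) *ᵥ one) + (A ^ N) *ᵥ one :=
        Finset.sum_range_succ _ N
      have h5 : (A ^ 0) *ᵥ one = one := by simp
      rw [h5] at h3
      have := h3.symm.trans h4
      -- (∑ p<N, A^{p+1} 1) + 1 = v + A^N 1
      rw [← hv] at this ⊢
      have : ∑ p ∈ Finset.range N, (A ^ (p+1)) *ᵥ one = v + (A ^ N) *ᵥ one - one := by
        rw [← this]; abel
      rw [this]; abel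
    rw [hshift]
    have := hrow k
    simp only [Pi.add_apply, Pi.sub_apply, hone]
    linarith
  set M : ℝ := ‖v‖ + 2 with hM
  have hvM : ∀ k, v k ≤ M := by
    intro k
    have := norm_le_pi_norm v k
    rw [Real.norm_eq_abs] at this
    have := le_abs_self (v k)
    have := norm_le_pi_norm v k
    calc v k ≤ |v k| := le_abs_self _
      _ ≤ ‖v‖ := by simpa [Real.norm_eq_abs] using norm_le_pi_norm v k
      _ ≤ M := by rw [hM]; linarith
  have hM1 : 1 ≤ M := by rw [hM]; linarith [norm_nonneg v]
  have hM2 : 2 ≤ M := by rw [hM]; linarith [norm_nonneg v]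
  refine ⟨v, hv1, 1 - (1 - η)/M, ?_, ?_, ?_⟩
  · have h1 : (1 - η)/M < 1 := by
      rw [div_lt_one (by linarith)]
      linarith
    linarith
  · have h2 : 0 < (1 - η)/M := div_pos (by linarith) (by linarith)
    linarith
  · intro k
    have h3 : (1 - (1 - η)/M) * v k = v k - (1 - η) * (v k / M) := by ring
    rw [h3]
    have h4 : v k / M ≤ 1 := by
      rw [div_le_one (by linarith)]; exact hvM k
    have h5 : (1 - η) * (v k / M) ≤ (1 - η) * 1 :=
      mul_le_mul_of_nonneg_left h4 (by linarith)
    have := hAv k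
    linarith

end SpectralAux

section PWAux

/-- A function affine on each member of a finite closed convex cover of ℝ, with slopes
bounded by `S`, moves at most `S * (b - a)` between `a ≤ b`. -/
lemma seg_pw_affine_bound {ι : Type*} [Finite ι] (J : ι → Set ℝ)
    (hclosed : ∀ l, IsClosed (J l))
    (hcov : ∀ t : ℝ, ∃ l, t ∈ J l)
    (φ : ℝ → ℝ) (slope : ι → ℝ)
    (haff : ∀ l, ∀ t ∈ J l, ∀ s ∈ J l, φ t - φ s = slope l * (t - s))
    (S : ℝ) (hS : ∀ l, |slope l| ≤ S)
    (a b : ℝ) (hab : a ≤ b) : |φ b - φ a| ≤ S * (b - a) := by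
  have hS0 : 0 ≤ S := le_trans (abs_nonneg _) (hS (hcov 0).choose)
  set A : Set ℝ := {t | t ∈ Set.Icc a b ∧ |φ t - φ a| ≤ S * (t - a)} with hA
  have haA : a ∈ A := ⟨⟨le_refl _, hab⟩, by simp⟩
  have hAne : A.Nonempty := ⟨a, haA⟩
  have hAbdd : BddAbove A := ⟨b, fun t ht => ht.1.2⟩
  set T := sSup A with hT
  have hTmem : T ∈ Set.Icc a b := ⟨le_csSup hAbdd haA, csSup_le hAne fun t ht => ht.1.2⟩
  -- a sequence in A tending to T
  have hseq : ∀ j : ℕ, ∃ t ∈ A, T - 1/(j+1) < t := by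
    intro j
    have : T - 1/(j+1) < T := by
      have : (0:ℝ) < 1/(j+1) := by positivity
      linarith
    exact exists_lt_of_lt_csSup hAne this
  choose t htA htgt using hseq
  have htle : ∀ j, t j ≤ T := fun j => le_csSup hAbdd (htA j)
  -- pigeonhole: a piece containing infinitely many t j
  choose pick hpick using fun j => hcov (t j)
  obtain ⟨l, hl⟩ := Finite.exists_infinite_fiber pick
  have hlinf : {j | pick j = l}.Infinite := by
    rw [← Set.infinite_coe_iff]; exact hl
  have hTJ : T ∈ J l := by
    rw [← (hclosed l).closure_eq]
    rw [Metric.mem_closure_iff]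
    intro ε hε
    obtain ⟨j, hjl, hjε⟩ : ∃ j, pick j = l ∧ 1/((j:ℝ)+1) < ε := by
      obtain ⟨Nn, hNn⟩ := exists_nat_one_div_lt hε
      obtain ⟨j, hjmem, hjgt⟩ := hlinf.exists_gt Nn
      refine ⟨j, hjmem, lt_of_le_of_lt ?_ hNn⟩
      apply one_div_le_one_div_of_le (by positivity)
      exact_mod_cast Nat.succ_le_succ hjgt.le
    refine ⟨t j, by rw [← hjl]; exact hpick j, ?_⟩
    rw [Real.dist_eq, abs_sub_lt_iff]
    constructor <;> [skip; skip] <;> nlinarith [htgt j, htle j]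
  -- T ∈ A
  have hTA : T ∈ A := by
    obtain ⟨j, hjl⟩ := hlinf.nonempty
    have htjJ : t j ∈ J l := by rw [← hjl]; exact hpick j
    have hd := haff l T hTJ (t j) htjJ
    have h1 : |φ T - φ (t j)| ≤ S * (T - t j) := by
      rw [hd, abs_mul]
      have := hS l
      have htj := htle j
      have : |T - t j| = T - t j := abs_of_nonneg (by linarith)
      rw [this]
      exact mul_le_mul_of_nonneg_right (hS l) (by linarith [htle j])
    refine ⟨hTmem, ?_⟩
    have h2 := (htA j).2
    have h3 : |φ T - φ a| ≤ |φ T - φ (t j)| + |φ (t j) - φ a| := by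
      have := abs_sub_abs_le_abs_sub (φ T - φ a) (φ (t j) - φ a)
      calc |φ T - φ a| = |(φ T - φ (t j)) + (φ (t j) - φ a)| := by ring_nf
        _ ≤ _ := abs_add_le _ _
    have := (htA j).1.1
    linarith
  -- T = b
  rcases eq_or_lt_of_le hTmem.2 with hTb | hTb
  · rw [← hTb]; exact hTA.2
  · exfalso
    -- points approaching T from the right
    set s : ℕ → ℝ := fun j => T + (b - T)/(j+1) with hs
    have hsmem : ∀ j, T < s j ∧ s j ≤ b := by
      intro j
      have h1 : (0:ℝ) < ((j:ℝ)+1) := by positivity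
      have h0 : 0 < b - T := by linarith
      constructor
      · have : 0 < (b - T)/(j+1) := div_pos h0 h1
        simp only [hs]; linarith
      · simp only [hs]
        have h2 : (b - T)/((j:ℝ)+1) ≤ b - T := by
          rw [div_le_iff₀ h1]; nlinarith
        linarith
    choose pick2 hpick2 using fun j => hcov (s j)
    obtain ⟨l2, hl2⟩ := Finite.exists_infinite_fiber pick2
    have hl2inf : {j | pick2 j = l2}.Infinite := by
      rw [← Set.infinite_coe_iff]; exact hl2
    have hTJ2 : T ∈ J l2 := by
      rw [← (hclosed l2).closure_eq, Metric.mem_closure_iff]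
      intro ε hε
      obtain ⟨j, hjl, hjε⟩ : ∃ j, pick2 j = l2 ∧ (b - T)/((j:ℝ)+1) < ε := by
        obtain ⟨Nn, hNn⟩ := exists_nat_gt ((b - T)/ε)
        obtain ⟨j, hjmem, hjgt⟩ := hl2inf.exists_gt Nn
        refine ⟨j, hjmem, ?_⟩
        rw [div_lt_iff₀ (by positivity)]
        have hjN : (b - T)/ε < (j:ℝ) + 1 := by
          have : (Nn:ℝ) ≤ (j:ℝ) := by exact_mod_cast hjgt.le
          linarith
        rw [div_lt_iff₀ hε] at hjN
        nlinarith
      refine ⟨s j, by rw [← hjl]; exact hpick2 j, ?_⟩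
      rw [Real.dist_eq]
      have := (hsmem j).1
      have habs : |T - s j| = s j - T := by rw [abs_sub_comm]; exact abs_of_pos (by linarith)
      rw [habs, hs]
      simpa using hjε
    obtain ⟨j, hjl⟩ := hl2inf.nonempty
    have hsJ : s j ∈ J l2 := by rw [← hjl]; exact hpick2 j
    have hd := haff l2 (s j) hsJ T hTJ2
    have hsjA : s j ∈ A := by
      refine ⟨⟨le_trans hTmem.1 (hsmem j).1.le, (hsmem j).2⟩, ?_⟩
      have h1 : |φ (s j) - φ T| ≤ S * (s j - T) := by
        rw [hd, abs_mul]
        have habs : |s j - T| = s j - T := abs_of_pos (by linarith [(hsmem j).1])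
        rw [habs]
        exact mul_le_mul_of_nonneg_right (hS l2) (by linarith [(hsmem j).1])
      have h3 : |φ (s j) - φ a| ≤ |φ (s j) - φ T| + |φ T - φ a| := by
        calc |φ (s j) - φ a| = |(φ (s j) - φ T) + (φ T - φ a)| := by ring_nf
          _ ≤ _ := abs_add_le _ _
      have h2 := hTA.2
      linarith
    have := le_csSup hAbdd hsjA
    linarith [(hsmem j).1]

open Matrix in
lemma pw_affine_lipschitz {n L : ℕ} {q : Fin L → ℕ}
    (F : Fin L → Matrix (Fin n) (Fin n) ℝ) (f : Fin L → Fin n → ℝ)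
    (G : (l : Fin L) → Matrix (Fin (q l)) (Fin n) ℝ) (g : (l : Fin L) → Fin (q l) → ℝ)
    (h : (Fin n → ℝ) → Fin n → ℝ)
    (hcov : ∀ c, ∃ l, 0 ≤ G l *ᵥ c + g l)
    (hpiece : ∀ l c, 0 ≤ G l *ᵥ c + g l → h c = F l *ᵥ c + f l)
    (Fb : Matrix (Fin n) (Fin n) ℝ) (hFb : ∀ l a b, |F l a b| ≤ Fb a b)
    (u u' : Fin n → ℝ) (k : Fin n) :
    |h u k - h u' k| ≤ ∑ j, Fb k j * |u j - u' j| := by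
  set d : Fin n → ℝ := u' - u with hd
  have hkey : ∀ (l : Fin L) (t : ℝ), G l *ᵥ (u + t • d) + g l
      = fun r => (G l *ᵥ u + g l) r + t * (G l *ᵥ d) r := by
    intro l t
    funext r
    simp [Matrix.mulVec_add, Matrix.mulVec_smul, Pi.add_apply, Pi.smul_apply, smul_eq_mul]
    ring
  set J : Fin L → Set ℝ := fun l => {t | 0 ≤ G l *ᵥ (u + t • d) + g l} with hJ
  have hclosed : ∀ l, IsClosed (J l) := by
    intro l
    have : J l = ⋂ r, {t : ℝ | 0 ≤ (G l *ᵥ u + g l) r + t * (G l *ᵥ d) r} := by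
      ext t
      simp only [hJ, Set.mem_setOf_eq, Set.mem_iInter, hkey l t, Pi.le_def, Pi.zero_apply]
    rw [this]
    exact isClosed_iInter fun r => isClosed_le continuous_const (by fun_prop)
  have hcov' : ∀ t : ℝ, ∃ l, t ∈ J l := fun t => hcov (u + t • d)
  set φ : ℝ → ℝ := fun t => h (u + t • d) k with hφ
  set slope : Fin L → ℝ := fun l => (F l *ᵥ d) k with hslope
  have haff : ∀ l, ∀ t ∈ J l, ∀ s ∈ J l, φ t - φ s = slope l * (t - s) := by
    intro l t ht s hs
    have h1 := hpiece l (u + t • d) ht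
    have h2 := hpiece l (u + s • d) hs
    simp only [hφ, h1, h2, Pi.add_apply, Matrix.mulVec_add, Matrix.mulVec_smul,
      Pi.smul_apply, smul_eq_mul, hslope]
    ring
  set S : ℝ := ∑ j, Fb k j * |u j - u' j| with hSdef
  have hS : ∀ l, |slope l| ≤ S := by
    intro l
    calc |slope l| = |∑ j, F l k j * d j| := by simp [hslope, Matrix.mulVec, dotProduct]
      _ ≤ ∑ j, |F l k j * d j| := Finset.abs_sum_le_sum_abs _ _
      _ ≤ S := by
          rw [hSdef]
          apply Finset.sum_le_sum
          intro j _
          rw [abs_mul]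
          have : |d j| = |u j - u' j| := by rw [hd]; simp [abs_sub_comm]
          rw [this]
          exact mul_le_mul_of_nonneg_right (hFb l k j) (abs_nonneg _)
  have := seg_pw_affine_bound J hclosed hcov' φ slope haff S hS 0 1 zero_le_one
  have h10 : φ 1 = h u' k := by rw [hφ]; norm_num [hd]
  have h00 : φ 0 = h u k := by rw [hφ]; norm_num
  rw [h10, h00] at this
  rw [abs_sub_comm]
  linarith

end PWAux

section MatAux

open Matrix

lemma aux_mulVec_apply {p q : ℕ} (M : Matrix (Fin p) (Fin q) ℝ) (f : Fin q → ℝ) (k : Fin p) :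
    (M *ᵥ f) k = ∑ j, M k j * f j := rfl

lemma aux_abs_mulVec_le {p q : ℕ} (M : Matrix (Fin p) (Fin q) ℝ) (f : Fin q → ℝ) (k : Fin p) :
    |(M *ᵥ f) k| ≤ (eAbs M *ᵥ fun j => |f j|) k := by
  rw [aux_mulVec_apply, aux_mulVec_apply]
  calc |∑ j, M k j * f j| ≤ ∑ j, |M k j * f j| := Finset.abs_sum_le_sum_abs _ _
    _ = ∑ j, eAbs M k j * |f j| := by
        apply Finset.sum_congr rfl
        intro j _
        rw [abs_mul]; rfl

lemma aux_mulVec_mono {p q : ℕ} (M : Matrix (Fin p) (Fin q) ℝ) (hM : ∀ a b, 0 ≤ M a b)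
    {f g : Fin q → ℝ} (hfg : ∀ j, f j ≤ g j) (k : Fin p) : (M *ᵥ f) k ≤ (M *ᵥ g) k := by
  rw [aux_mulVec_apply, aux_mulVec_apply]
  exact Finset.sum_le_sum fun j _ => mul_le_mul_of_nonneg_left (hfg j) (hM k j)

lemma aux_sum_mulVec {ι : Type*} (s : Finset ι) {p q : ℕ}
    (B : ι → Matrix (Fin p) (Fin q) ℝ) (f : Fin q → ℝ) :
    (∑ i ∈ s, B i) *ᵥ f = ∑ i ∈ s, B i *ᵥ f := by
  funext k
  have hentry : ∀ j, (∑ i ∈ s, B i) k j = ∑ i ∈ s, B i k j := by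
    intro j; rw [Matrix.sum_apply]
  rw [aux_mulVec_apply]
  simp only [hentry, Finset.sum_mul, Finset.sum_apply, aux_mulVec_apply]
  rw [Finset.sum_comm]

lemma aux_clamp_lip {ι : Type*} (m a b : ι → ℝ) (k : ι) :
    |clamp m a k - clamp m b k| ≤ |a k - b k| := by
  simp only [clamp]
  have h1 : |min (max (a k) 0) (m k) - min (max (b k) 0) (m k)|
      ≤ max |max (a k) 0 - max (b k) 0| |m k - m k| := abs_min_sub_min_le_max _ _ _ _
  have h2 : |max (a k) 0 - max (b k) 0| ≤ max |a k - b k| |(0:ℝ) - 0| := abs_max_sub_max_le_max _ _ _ _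
  simp only [sub_self, abs_zero] at h1 h2
  calc |min (max (a k) 0) (m k) - min (max (b k) 0) (m k)|
      ≤ max |max (a k) 0 - max (b k) 0| 0 := h1
    _ = |max (a k) 0 - max (b k) 0| := max_eq_left (abs_nonneg _)
    _ ≤ max |a k - b k| 0 := h2
    _ = |a k - b k| := max_eq_left (abs_nonneg _)

end MatAux

/-- Sufficient condition for existence and uniqueness of equilibria and global exponential
stability in multilayer linear-threshold networks with parallel connections: if the functions
`h_i` are piecewise-affine with entrywise maximal gains `F̄_i`, and
`ρ(|W| + Σ_i |W_1^i| F̄_i |W_2^i|) < 1`, then for all constants `c̄_i, c`, the dynamics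
`τ ẋ = −x + [W x + Σ_i W_1^i h_i(W_2^i x + c̄_i) + c]_0^m` is globally exponentially stable
to a unique equilibrium. -/
theorem multilayer_linear_threshold_GES {n n' K : ℕ}
    (Λ : Fin K → ℕ) (q : (i : Fin K) → Fin (Λ i) → ℕ)
    (F : (i : Fin K) → Fin (Λ i) → Matrix (Fin n) (Fin n) ℝ)
    (f : (i : Fin K) → Fin (Λ i) → (Fin n → ℝ))
    (G : (i : Fin K) → (l : Fin (Λ i)) → Matrix (Fin (q i l)) (Fin n) ℝ)
    (g : (i : Fin K) → (l : Fin (Λ i)) → Fin (q i l) → ℝ)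
    (h : Fin K → (Fin n → ℝ) → (Fin n → ℝ))
    (hcover : ∀ (i : Fin K) (c : Fin n → ℝ), ∃ l : Fin (Λ i), 0 ≤ G i l *ᵥ c + g i l)
    (hpiece : ∀ (i : Fin K) (l : Fin (Λ i)) (c : Fin n → ℝ),
      0 ≤ G i l *ᵥ c + g i l → h i c = F i l *ᵥ c + f i l)
    (Fbar : Fin K → Matrix (Fin n) (Fin n) ℝ)
    (hFbar : ∀ (i : Fin K) (a b : Fin n), Fbar i a b = ⨆ lam : Fin (Λ i), |F i lam a b|)
    (W : Matrix (Fin n') (Fin n') ℝ)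
    (W1 : Fin K → Matrix (Fin n') (Fin n) ℝ)
    (W2 : Fin K → Matrix (Fin n) (Fin n') ℝ)
    (m : Fin n' → ℝ) (hm : ∀ j, 0 < m j)
    (τ : ℝ) (hτ : 0 < τ)
    (hρ : specRad (eAbs W + ∑ i : Fin K, eAbs (W1 i) * Fbar i * eAbs (W2 i)) < 1)
    (cbar : Fin K → (Fin n → ℝ)) (c : Fin n' → ℝ) :
    ∃ xstar : Fin n' → ℝ,
      (xstar = clamp m (W *ᵥ xstar + ∑ i : Fin K, W1 i *ᵥ h i (W2 i *ᵥ xstar + cbar i) + c) ∧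
        ∀ y : Fin n' → ℝ,
          y = clamp m (W *ᵥ y + ∑ i : Fin K, W1 i *ᵥ h i (W2 i *ᵥ y + cbar i) + c) →
          y = xstar) ∧
      ∃ C ≥ (1:ℝ), ∃ lam > (0:ℝ), ∀ x : ℝ → Fin n' → ℝ,
        (∀ t, HasDerivAt x
          (τ⁻¹ • (-x t + clamp m
            (W *ᵥ x t + ∑ i : Fin K, W1 i *ᵥ h i (W2 i *ᵥ x t + cbar i) + c))) t) →
        ∀ t ≥ (0:ℝ), ‖x t - xstar‖ ≤ C * ‖x 0 - xstar‖ * Real.exp (-lam * t) := by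
  classical
  set A : Matrix (Fin n') (Fin n') ℝ :=
    eAbs W + ∑ i : Fin K, eAbs (W1 i) * Fbar i * eAbs (W2 i) with hA
  set T : (Fin n' → ℝ) → (Fin n' → ℝ) := fun x =>
    clamp m (W *ᵥ x + ∑ i : Fin K, W1 i *ᵥ h i (W2 i *ᵥ x + cbar i) + c) with hTdef
  -- nonnegativity of Fbar and A
  have hFb0 : ∀ i a b, 0 ≤ Fbar i a b := by
    intro i a b; rw [hFbar]
    exact Real.iSup_nonneg fun l => abs_nonneg _
  have hFble : ∀ (i : Fin K) (l : Fin (Λ i)) (a b : Fin n), |F i l a b| ≤ Fbar i a b := by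
    intro i l a b; rw [hFbar]
    exact le_ciSup (f := fun lam : Fin (Λ i) => |F i lam a b|)
      (Set.Finite.bddAbove (Set.finite_range _)) l
  have hA0 : ∀ a b, 0 ≤ A a b := by
    intro a b
    rw [hA, Matrix.add_apply, Matrix.sum_apply]
    have h1 : (0:ℝ) ≤ eAbs W a b := abs_nonneg _
    have h2 : ∀ i, 0 ≤ (eAbs (W1 i) * Fbar i * eAbs (W2 i)) a b := by
      intro i
      rw [Matrix.mul_apply]
      refine Finset.sum_nonneg fun j _ => mul_nonneg ?_ (abs_nonneg _)
      rw [Matrix.mul_apply]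
      exact Finset.sum_nonneg fun l _ => mul_nonneg (abs_nonneg _) (hFb0 i l j)
    exact add_nonneg h1 (Finset.sum_nonneg fun i _ => h2 i)
  -- entrywise Lipschitz bound for T
  have hTlip : ∀ x y k, |T x k - T y k| ≤ (A *ᵥ fun l => |x l - y l|) k := by
    intro x y k
    set e : Fin n' → ℝ := fun l => |x l - y l| with he
    have h0 : |T x k - T y k| ≤
        |(W *ᵥ x + ∑ i : Fin K, W1 i *ᵥ h i (W2 i *ᵥ x + cbar i) + c) k
          - (W *ᵥ y + ∑ i : Fin K, W1 i *ᵥ h i (W2 i *ᵥ y + cbar i) + c) k| :=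
      aux_clamp_lip m _ _ k
    have h1 : (W *ᵥ x + ∑ i : Fin K, W1 i *ᵥ h i (W2 i *ᵥ x + cbar i) + c) k
          - (W *ᵥ y + ∑ i : Fin K, W1 i *ᵥ h i (W2 i *ᵥ y + cbar i) + c) k
        = (W *ᵥ (x - y)) k
          + ∑ i : Fin K,
            (W1 i *ᵥ (h i (W2 i *ᵥ x + cbar i) - h i (W2 i *ᵥ y + cbar i))) k := by
      simp only [Pi.add_apply, Finset.sum_apply, Matrix.mulVec_sub, Pi.sub_apply,
        Finset.sum_sub_distrib]
      ring
    have h2 : |T x k - T y k| ≤ |(W *ᵥ (x - y)) k|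
        + ∑ i : Fin K,
          |(W1 i *ᵥ (h i (W2 i *ᵥ x + cbar i) - h i (W2 i *ᵥ y + cbar i))) k| := by
      refine h0.trans ?_
      rw [h1]
      calc |(W *ᵥ (x - y)) k + ∑ i : Fin K,
            (W1 i *ᵥ (h i (W2 i *ᵥ x + cbar i) - h i (W2 i *ᵥ y + cbar i))) k|
          ≤ |(W *ᵥ (x - y)) k| + |∑ i : Fin K,
            (W1 i *ᵥ (h i (W2 i *ᵥ x + cbar i) - h i (W2 i *ᵥ y + cbar i))) k| := abs_add_le _ _
        _ ≤ _ := add_le_add le_rfl (Finset.abs_sum_le_sum_abs _ _)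
    have hW : |(W *ᵥ (x - y)) k| ≤ (eAbs W *ᵥ e) k := by
      have := aux_abs_mulVec_le W (x - y) k
      simpa [he, Pi.sub_apply] using this
    have hWi : ∀ i : Fin K,
        |(W1 i *ᵥ (h i (W2 i *ᵥ x + cbar i) - h i (W2 i *ᵥ y + cbar i))) k|
          ≤ ((eAbs (W1 i) * Fbar i * eAbs (W2 i)) *ᵥ e) k := by
      intro i
      set u1 : Fin n → ℝ := W2 i *ᵥ x + cbar i with hu1
      set u2 : Fin n → ℝ := W2 i *ᵥ y + cbar i with hu2
      have hd1 : |(W1 i *ᵥ (h i u1 - h i u2)) k|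
          ≤ (eAbs (W1 i) *ᵥ fun j => |h i u1 j - h i u2 j|) k := by
        have := aux_abs_mulVec_le (W1 i) (h i u1 - h i u2) k
        simpa [Pi.sub_apply] using this
      have hd2 : ∀ j, |h i u1 j - h i u2 j| ≤ (Fbar i *ᵥ fun a => |u1 a - u2 a|) j := by
        intro j
        have := pw_affine_lipschitz (F i) (f i) (G i) (g i) (h i) (hcover i) (hpiece i)
          (Fbar i) (hFble i) u1 u2 j
        rw [aux_mulVec_apply]
        exact this
      have hd3 : ∀ a, |u1 a - u2 a| ≤ (eAbs (W2 i) *ᵥ e) a := by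
        intro a
        have hu : u1 a - u2 a = (W2 i *ᵥ (x - y)) a := by
          simp only [hu1, hu2, Pi.add_apply, Matrix.mulVec_sub, Pi.sub_apply]
          ring
        rw [hu]
        have := aux_abs_mulVec_le (W2 i) (x - y) a
        simpa [he, Pi.sub_apply] using this
      have hmono1 : ∀ j, (Fbar i *ᵥ fun a => |u1 a - u2 a|) j
          ≤ (Fbar i *ᵥ (eAbs (W2 i) *ᵥ e)) j :=
        fun j => aux_mulVec_mono (Fbar i) (hFb0 i) hd3 j
      have hmono0 : (eAbs (W1 i) *ᵥ fun j => |h i u1 j - h i u2 j|) k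
          ≤ (eAbs (W1 i) *ᵥ (Fbar i *ᵥ (eAbs (W2 i) *ᵥ e))) k :=
        aux_mulVec_mono (eAbs (W1 i)) (fun a b => abs_nonneg _)
          (fun j => (hd2 j).trans (hmono1 j)) k
      have hassoc : (eAbs (W1 i) * Fbar i * eAbs (W2 i)) *ᵥ e
          = eAbs (W1 i) *ᵥ (Fbar i *ᵥ (eAbs (W2 i) *ᵥ e)) := by
        rw [← Matrix.mulVec_mulVec, ← Matrix.mulVec_mulVec]
      rw [hassoc]
      exact hd1.trans hmono0
    have hAe : (A *ᵥ e) k = (eAbs W *ᵥ e) k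
        + ∑ i : Fin K, ((eAbs (W1 i) * Fbar i * eAbs (W2 i)) *ᵥ e) k := by
      rw [hA, Matrix.add_mulVec, aux_sum_mulVec, Pi.add_apply, Finset.sum_apply]
    rw [hAe]
    exact h2.trans (add_le_add hW (Finset.sum_le_sum fun i _ => hWi i))
  -- weight vector
  obtain ⟨v, hv1, κ, hκ0, hκ1, hAv⟩ := aux_exists_weight_vec A hA0 hρ
  have hv0 : ∀ k, 0 < v k := fun k => lt_of_lt_of_le one_pos (hv1 k)
  set Φ : (Fin n' → ℝ) → (Fin n' → ℝ) := fun z k => z k * (v k)⁻¹ with hΦ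
  set D : (Fin n' → ℝ) → (Fin n' → ℝ) := fun z k => v k * z k with hD
  have hDΦ : ∀ z, D (Φ z) = z := by
    intro z; funext k; simp only [hΦ, hD]; field_simp [(hv0 k).ne']
  have hcontr : ∀ x y, ‖Φ (T x - T y)‖ ≤ κ * ‖Φ (x - y)‖ := by
    intro x y
    set r := ‖Φ (x - y)‖ with hr
    have hr0 : 0 ≤ r := norm_nonneg _
    have he : ∀ l, |x l - y l| ≤ r * v l := by
      intro l
      have h1 : |Φ (x - y) l| ≤ r := by
        simpa [Real.norm_eq_abs] using norm_le_pi_norm (Φ (x - y)) l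
      have h2 : Φ (x - y) l = (x l - y l) * (v l)⁻¹ := by simp [hΦ, Pi.sub_apply]
      rw [h2, abs_mul, abs_inv, abs_of_pos (hv0 l)] at h1
      have h3 := mul_le_mul_of_nonneg_right h1 (hv0 l).le
      have h4 : |x l - y l| * (v l)⁻¹ * v l = |x l - y l| := by
        field_simp [(hv0 l).ne']
      rw [h4] at h3
      exact h3
    have hbd : ∀ k, |T x k - T y k| ≤ κ * r * v k := by
      intro k
      have h2 : (A *ᵥ fun l => |x l - y l|) k ≤ (A *ᵥ fun l => r * v l) k :=
        aux_mulVec_mono A hA0 he k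
      have h3 : (A *ᵥ fun l => r * v l) k = r * (A *ᵥ v) k := by
        rw [aux_mulVec_apply, aux_mulVec_apply, Finset.mul_sum]
        exact Finset.sum_congr rfl fun j _ => by ring
      have h4 : r * (A *ᵥ v) k ≤ r * (κ * v k) := mul_le_mul_of_nonneg_left (hAv k) hr0
      calc |T x k - T y k| ≤ (A *ᵥ fun l => |x l - y l|) k := hTlip x y k
        _ ≤ (A *ᵥ fun l => r * v l) k := h2
        _ = r * (A *ᵥ v) k := h3
        _ ≤ r * (κ * v k) := h4
        _ = κ * r * v k := by ring
    apply (pi_norm_le_iff_of_nonneg (by positivity)).2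
    intro k
    have h5 : Φ (T x - T y) k = (T x k - T y k) * (v k)⁻¹ := by simp [hΦ, Pi.sub_apply]
    rw [Real.norm_eq_abs, h5, abs_mul, abs_inv, abs_of_pos (hv0 k)]
    have h6 := mul_le_mul_of_nonneg_right (hbd k) (inv_nonneg.mpr (hv0 k).le)
    have h7 : κ * r * v k * (v k)⁻¹ = κ * r := by
      field_simp [(hv0 k).ne']
    rw [h7] at h6
    exact h6
  -- Banach fixed point
  set Smap : (Fin n' → ℝ) → (Fin n' → ℝ) := fun z => Φ (T (D z)) with hSmap
  have hκnn : (Real.toNNReal κ : ℝ) = κ := Real.coe_toNNReal κ hκ0.le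
  have hSlip : ∀ z z', dist (Smap z) (Smap z') ≤ κ * dist z z' := by
    intro z z'
    rw [dist_eq_norm, dist_eq_norm]
    have h1 : Smap z - Smap z' = Φ (T (D z) - T (D z')) := by
      funext k; simp only [hSmap, hΦ, Pi.sub_apply]; ring
    have h2 : Φ (D z - D z') = z - z' := by
      funext k
      simp only [hΦ, hD, Pi.sub_apply]
      field_simp [(hv0 k).ne']
    calc ‖Smap z - Smap z'‖ = ‖Φ (T (D z) - T (D z'))‖ := by rw [h1]
      _ ≤ κ * ‖Φ (D z - D z')‖ := hcontr _ _
      _ = κ * ‖z - z'‖ := by rw [h2]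
  have hcon : ContractingWith (Real.toNNReal κ) Smap := by
    constructor
    · rw [← NNReal.coe_lt_coe, hκnn, NNReal.coe_one]
      exact hκ1
    · refine LipschitzWith.of_dist_le_mul fun z z' => ?_
      rw [hκnn]
      exact hSlip z z'
  set zstar := hcon.fixedPoint with hzstar
  have hzfix : Smap zstar = zstar := hcon.fixedPoint_isFixedPt
  set xstar := D zstar with hxstar
  have hfix : T xstar = xstar := by
    have h1 : Φ (T xstar) = zstar := hzfix
    calc T xstar = D (Φ (T xstar)) := (hDΦ _).symm
      _ = D zstar := by rw [h1]
      _ = xstar := rfl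
  refine ⟨xstar, ⟨hfix.symm, ?_⟩, ?_⟩
  · intro y hy
    have hyT : T y = y := hy.symm
    have hSy : Smap (Φ y) = Φ y := by
      have : D (Φ y) = y := hDΦ y
      rw [hSmap]
      simp only [this, hyT]
    have huniq : Φ y = zstar := hcon.fixedPoint_unique hSy
    calc y = D (Φ y) := (hDΦ y).symm
      _ = D zstar := by rw [huniq]
      _ = xstar := rfl
  -- GES
  · refine ⟨‖v‖ + 2, by linarith [norm_nonneg v], (1 - κ)/τ,
      div_pos (by linarith) hτ, ?_⟩
    intro x hx t ht
    set lam : ℝ := (1 - κ)/τ with hlam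
    set C : ℝ := ‖v‖ + 2 with hC
    set z : ℝ → Fin n' → ℝ := fun s => Φ (x s - xstar) with hz
    set w : ℝ → Fin n' → ℝ := fun s k => Real.exp (s/τ) * ((x s k - xstar k) * (v k)⁻¹)
      with hw
    set w' : ℝ → Fin n' → ℝ :=
      fun s k => τ⁻¹ * Real.exp (s/τ) * ((T (x s) k - xstar k) * (v k)⁻¹) with hw'
    have hderiv : ∀ s, HasDerivAt w (w' s) s := by
      intro s
      refine hasDerivAt_pi.2 fun k => ?_
      have h1 : HasDerivAt (fun u : ℝ => u/τ) (1/τ) s := (hasDerivAt_id s).div_const τ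
      have h2 : HasDerivAt (fun u : ℝ => Real.exp (u/τ)) (Real.exp (s/τ) * (1/τ)) s := h1.exp
      have h3 : HasDerivAt (fun u => x u k) ((τ⁻¹ • (-x s + T (x s))) k) s :=
        hasDerivAt_pi.1 (hx s) k
      have h4 : HasDerivAt (fun u => (x u k - xstar k) * (v k)⁻¹)
          (((τ⁻¹ • (-x s + T (x s))) k) * (v k)⁻¹) s := (h3.sub_const _).mul_const _
      have h5 := h2.mul h4
      convert h5 using 1
      case e'_4 => rfl
      case e'_8 => rfl
      have hk : (τ⁻¹ • (-x s + T (x s))) k = τ⁻¹ * (-(x s k) + T (x s) k) := by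
        simp [Pi.smul_apply, smul_eq_mul, Pi.add_apply, Pi.neg_apply]
      rw [hw', hk]
      ring
    have hwz : ∀ s, w s = Real.exp (s/τ) • z s := by
      intro s; funext k
      simp only [hw, hz, hΦ, Pi.smul_apply, smul_eq_mul, Pi.sub_apply]
    have hwnorm : ∀ s, ‖w s‖ = Real.exp (s/τ) * ‖z s‖ := by
      intro s
      rw [hwz s, norm_smul, Real.norm_eq_abs, abs_of_pos (Real.exp_pos _)]
    have hbound : ∀ s, ‖w' s‖ ≤ (κ/τ) * ‖w s‖ := by
      intro s
      have h1 : w' s = (τ⁻¹ * Real.exp (s/τ)) • Φ (T (x s) - T xstar) := by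
        funext k
        rw [hfix]
        simp only [hw', hΦ, Pi.sub_apply, Pi.smul_apply, smul_eq_mul]
      rw [h1, norm_smul, Real.norm_eq_abs,
        abs_of_pos (by positivity : (0:ℝ) < τ⁻¹ * Real.exp (s/τ))]
      have h3 := hcontr (x s) xstar
      have h4 : Φ (x s - xstar) = z s := rfl
      rw [h4] at h3
      calc τ⁻¹ * Real.exp (s/τ) * ‖Φ (T (x s) - T xstar)‖
          ≤ τ⁻¹ * Real.exp (s/τ) * (κ * ‖z s‖) := by
            exact mul_le_mul_of_nonneg_left h3 (by positivity)
        _ = (κ/τ) * (Real.exp (s/τ) * ‖z s‖) := by field_simp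
        _ = (κ/τ) * ‖w s‖ := by rw [hwnorm s]
    -- Grönwall
    have hgron : ‖w t‖ ≤ ‖w 0‖ * Real.exp ((κ/τ) * t) := by
      have hcont : ContinuousOn w (Set.Icc 0 t) :=
        fun s _ => ((hderiv s).continuousAt).continuousWithinAt
      have hds : ∀ s ∈ Set.Ico (0:ℝ) t, HasDerivWithinAt w (w' s) (Set.Ici s) s :=
        fun s _ => (hderiv s).hasDerivWithinAt
      have hbd : ∀ s ∈ Set.Ico (0:ℝ) t, ‖w' s‖ ≤ (κ/τ) * ‖w s‖ + 0 :=
        fun s _ => by simpa using hbound s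
      have := norm_le_gronwallBound_of_norm_deriv_right_le hcont hds (le_refl ‖w 0‖) hbd
        t ⟨ht, le_refl t⟩
      rwa [gronwallBound_ε0, sub_zero] at this
    -- assemble
    have hzt : ‖z t‖ ≤ ‖z 0‖ * Real.exp (-lam * t) := by
      have he1 : Real.exp (t/τ) * ‖z t‖ ≤ ‖z 0‖ * Real.exp ((κ/τ) * t) := by
        calc Real.exp (t/τ) * ‖z t‖ = ‖w t‖ := (hwnorm t).symm
          _ ≤ ‖w 0‖ * Real.exp ((κ/τ) * t) := hgron
          _ = ‖z 0‖ * Real.exp ((κ/τ) * t) := by rw [hwnorm 0]; norm_num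
      have hepos := Real.exp_pos (t/τ)
      have key : Real.exp (t/τ) * (‖z 0‖ * Real.exp (-lam * t))
          = ‖z 0‖ * Real.exp ((κ/τ) * t) := by
        rw [hlam]
        rw [show ‖z 0‖ * Real.exp ((κ/τ) * t)
            = ‖z 0‖ * (Real.exp (t/τ) * Real.exp (-((1-κ)/τ) * t)) from ?_]
        · ring
        · rw [← Real.exp_add]
          congr 2
          field_simp
          ring
      exact le_of_mul_le_mul_left (by rw [key]; exact he1) hepos
    have hxz : ‖x t - xstar‖ ≤ C * ‖z t‖ := by
      apply (pi_norm_le_iff_of_nonneg (by positivity)).2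
      intro k
      have h1 : (x t - xstar) k = v k * (z t k) := by
        simp only [hz, hΦ, Pi.sub_apply]
        field_simp [(hv0 k).ne']
      rw [Real.norm_eq_abs, h1, abs_mul, abs_of_pos (hv0 k)]
      have h2 : |z t k| ≤ ‖z t‖ := by
        simpa [Real.norm_eq_abs] using norm_le_pi_norm (z t) k
      have h3 : v k ≤ C := by
        rw [hC]
        have := norm_le_pi_norm v k
        rw [Real.norm_eq_abs] at this
        have h4 := le_abs_self (v k)
        linarith
      nlinarith [abs_nonneg (z t k), norm_nonneg (z t), (hv0 k)]
    have hz0 : ‖z 0‖ ≤ ‖x 0 - xstar‖ := by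
      apply (pi_norm_le_iff_of_nonneg (norm_nonneg _)).2
      intro k
      have h1 : z 0 k = (x 0 k - xstar k) * (v k)⁻¹ := by simp [hz, hΦ, Pi.sub_apply]
      rw [Real.norm_eq_abs, h1, abs_mul, abs_inv, abs_of_pos (hv0 k)]
      have h2 : (v k)⁻¹ ≤ 1 := by
        rw [inv_le_one_iff₀]
        right; exact hv1 k
      have h3 : |x 0 k - xstar k| ≤ ‖x 0 - xstar‖ := by
        have := norm_le_pi_norm (x 0 - xstar) k
        simpa [Real.norm_eq_abs, Pi.sub_apply] using this
      nlinarith [abs_nonneg (x 0 k - xstar k)]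
    calc ‖x t - xstar‖ ≤ C * ‖z t‖ := hxz
      _ ≤ C * (‖z 0‖ * Real.exp (-lam * t)) := by
          apply mul_le_mul_of_nonneg_left hzt
          rw [hC]; linarith [norm_nonneg v]
      _ ≤ C * (‖x 0 - xstar‖ * Real.exp (-lam * t)) := by
          have hCpos : 0 ≤ C := by rw [hC]; linarith [norm_nonneg v]
          have := mul_le_mul_of_nonneg_right hz0 (Real.exp_pos (-lam * t)).le
          nlinarith
      _ = C * ‖x 0 - xstar‖ * Real.exp (-lam * t) := by ring
end
end

section
/- Every single-valued piecewise-affine function h : ℝ^n → ℝ^n — that is, a function for which there exist a finite index set Λ and, for each λ ∈ Λ, a matrix F_λ, vector f_λ, matrix G_λ and vector g_λ such that h(c) = F_λ c + f_λ for all c in the polyhedron Ψ_λ = {c : G_λ c + g_λ ≥ 0}, with the union of the Ψ_λ equal to ℝ^n — is globally Lipschitz: there exists L ≥ 0 such that ‖h(c) − h(c')‖ ≤ L ‖c − c'‖ for all c, c' ∈ ℝ^n. -/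
open Matrix

noncomputable section

/-- A function `h : ℝ^n → ℝ^n` is piecewise-affine if there are finitely many affine pieces
`c ↦ F_λ c + f_λ`, valid on polyhedra `Ψ_λ = {c : G_λ c + g_λ ≥ 0}` whose union is all of
`ℝ^n`. -/
def IsPiecewiseAffine {n : ℕ} (h : (Fin n → ℝ) → (Fin n → ℝ)) : Prop :=
  ∃ (K : ℕ) (q : Fin K → ℕ)
    (F : Fin K → Matrix (Fin n) (Fin n) ℝ) (f : Fin K → (Fin n → ℝ))
    (G : (l : Fin K) → Matrix (Fin (q l)) (Fin n) ℝ) (g : (l : Fin K) → Fin (q l) → ℝ),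
    (∀ c : Fin n → ℝ, ∃ l : Fin K, 0 ≤ G l *ᵥ c + g l) ∧
    (∀ (l : Fin K) (c : Fin n → ℝ), 0 ≤ G l *ᵥ c + g l → h c = F l *ᵥ c + f l)

/-- Every (single-valued) piecewise-affine function is globally Lipschitz. -/
theorem piecewise_affine_globally_lipschitz {n : ℕ}
    (h : (Fin n → ℝ) → (Fin n → ℝ)) (hpwa : IsPiecewiseAffine h) :
    ∃ L : ℝ, 0 ≤ L ∧ ∀ c c' : Fin n → ℝ, ‖h c - h c'‖ ≤ L * ‖c - c'‖ := by
  classical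
  obtain ⟨K, q, F, f, G, g, hcover, hval⟩ := hpwa
  have hK : Nonempty (Fin K) := by
    obtain ⟨l, -⟩ := hcover 0; exact ⟨l⟩
  obtain ⟨l₀⟩ := hK
  set M : Fin K → ℝ := fun l => ‖LinearMap.toContinuousLinearMap ((F l).mulVecLin)‖ with hM
  set L : ℝ := Finset.univ.sup' ⟨l₀, Finset.mem_univ l₀⟩ M with hLdef
  have hML : ∀ l, M l ≤ L := fun l => Finset.le_sup' M (Finset.mem_univ l)
  have hL0 : 0 ≤ L := le_trans (norm_nonneg _) (hML l₀)
  refine ⟨L, hL0, ?_⟩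
  intro c c'
  set v : Fin n → ℝ := c' - c with hv
  -- bound when two points of the segment lie in the same piece
  have key : ∀ (l : Fin K) (s t : ℝ),
      0 ≤ G l *ᵥ (c + s • v) + g l → 0 ≤ G l *ᵥ (c + t • v) + g l →
      ‖h (c + t • v) - h (c + s • v)‖ ≤ L * (|t - s| * ‖v‖) := by
    intro l s t hs ht
    rw [hval l _ ht, hval l _ hs]
    have heq : (F l *ᵥ (c + t • v) + f l) - (F l *ᵥ (c + s • v) + f l)
        = (F l).mulVecLin ((t - s) • v) := by
      simp only [← Matrix.mulVecLin_apply]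
      rw [add_sub_add_right_eq_sub, ← map_sub]
      congr 1
      module
    rw [heq]
    have h1 : ‖(F l).mulVecLin ((t - s) • v)‖ ≤ M l * ‖(t - s) • v‖ := by
      have := (LinearMap.toContinuousLinearMap ((F l).mulVecLin)).le_opNorm ((t - s) • v)
      simpa only [LinearMap.coe_toContinuousLinearMap', hM] using this
    calc ‖(F l).mulVecLin ((t - s) • v)‖ ≤ M l * ‖(t - s) • v‖ := h1
      _ = M l * (|t - s| * ‖v‖) := by rw [norm_smul, Real.norm_eq_abs]
      _ ≤ L * (|t - s| * ‖v‖) := by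
          apply mul_le_mul_of_nonneg_right (hML l)
          positivity
  -- the pieces along the segment
  set I : Fin K → Set ℝ := fun l => {t : ℝ | 0 ≤ G l *ᵥ (c + t • v) + g l} with hI
  have hIc : ∀ l, IsClosed (I l) := by
    intro l
    have hrw : I l = ⋂ i, {t : ℝ | 0 ≤ (G l *ᵥ (c + t • v) + g l) i} := by
      ext t
      simp [hI, Pi.le_def, Set.mem_iInter]
    rw [hrw]
    refine isClosed_iInter fun i => isClosed_le continuous_const ?_
    have hcomp : ∀ t : ℝ, (G l *ᵥ (c + t • v) + g l) i
        = (G l *ᵥ c) i + t * (G l *ᵥ v) i + g l i := by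
      intro t
      simp [Matrix.mulVec_add, Matrix.mulVec_smul]
    simp only [hcomp]
    fun_prop
  -- local uniform piece-sharing
  have hloc : ∀ s : ℝ, ∃ ε > 0, ∀ t : ℝ, |t - s| < ε →
      ∃ l, s ∈ I l ∧ t ∈ I l := by
    intro s
    set U : Set ℝ := ⋃ l : {l : Fin K // s ∉ I l}, I l.1 with hU
    have hUc : IsClosed U := isClosed_iUnion_of_finite fun l => hIc l.1
    have hsU : s ∉ U := by
      simp only [hU, Set.mem_iUnion]
      rintro ⟨⟨l, hl⟩, hmem⟩
      exact hl hmem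
    obtain ⟨ε, hε, hball⟩ := Metric.isOpen_iff.mp hUc.isOpen_compl s hsU
    refine ⟨ε, hε, fun t ht => ?_⟩
    obtain ⟨l, hl⟩ := hcover (c + t • v)
    have htI : t ∈ I l := hl
    by_cases hs : s ∈ I l
    · exact ⟨l, hs, htI⟩
    · exfalso
      have htU : t ∈ U := by
        simp only [hU, Set.mem_iUnion]
        exact ⟨⟨l, hs⟩, htI⟩
      have : t ∈ Metric.ball s ε := by
        rw [Metric.mem_ball, Real.dist_eq]; exact ht
      exact (hball this) htU
  -- sup argument along the segment
  set S : Set ℝ :=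
    {t : ℝ | t ∈ Set.Icc (0:ℝ) 1 ∧ ‖h (c + t • v) - h c‖ ≤ L * (t * ‖v‖)} with hS
  have h0S : (0:ℝ) ∈ S := by
    constructor
    · exact ⟨le_refl 0, zero_le_one⟩
    · simp
  have hSne : S.Nonempty := ⟨0, h0S⟩
  have hSbdd : BddAbove S := ⟨1, fun t ht => ht.1.2⟩
  set s := sSup S with hs
  have hs0 : 0 ≤ s := le_csSup hSbdd h0S
  have hs1 : s ≤ 1 := csSup_le hSne fun t ht => ht.1.2
  have hsS : s ∈ S := by
    obtain ⟨ε, hε, hloc'⟩ := hloc s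
    obtain ⟨t, htS, hts⟩ := exists_lt_of_lt_csSup hSne (by linarith : s - ε < s)
    have hts' : t ≤ s := le_csSup hSbdd htS
    have habs : |s - t| < ε := by
      rw [abs_of_nonneg (by linarith)]; linarith
    obtain ⟨l, hIs, hIt⟩ := hloc' t (by rwa [abs_sub_comm])
    have hb : ‖h (c + s • v) - h (c + t • v)‖ ≤ L * (|s - t| * ‖v‖) := key l t s hIt hIs
    refine ⟨⟨hs0, hs1⟩, ?_⟩
    have htri : ‖h (c + s • v) - h c‖
        ≤ ‖h (c + s • v) - h (c + t • v)‖ + ‖h (c + t • v) - h c‖ :=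
      norm_sub_le_norm_sub_add_norm_sub _ _ _
    have ht0 : 0 ≤ t := htS.1.1
    have : ‖h (c + s • v) - h c‖ ≤ L * (|s - t| * ‖v‖) + L * (t * ‖v‖) :=
      le_trans htri (add_le_add hb htS.2)
    calc ‖h (c + s • v) - h c‖ ≤ L * (|s - t| * ‖v‖) + L * (t * ‖v‖) := this
      _ = L * ((|s - t| + t) * ‖v‖) := by ring
      _ = L * (s * ‖v‖) := by rw [abs_of_nonneg (by linarith : (0:ℝ) ≤ s - t)]; ring_nf
  have h1S : (1:ℝ) ∈ S := by
    rcases eq_or_lt_of_le hs1 with heq | hlt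
    · rwa [← heq]
    · exfalso
      obtain ⟨ε, hε, hloc'⟩ := hloc s
      set u : ℝ := min 1 (s + ε / 2) with hu
      have hsu : s < u := lt_min hlt (by linarith)
      have hu1 : u ≤ 1 := min_le_left _ _
      have habs : |u - s| < ε := by
        rw [abs_of_nonneg (by linarith)]
        have : u ≤ s + ε / 2 := min_le_right _ _
        linarith
      obtain ⟨l, hls, hlu⟩ := hloc' u habs
      have hb : ‖h (c + u • v) - h (c + s • v)‖ ≤ L * (|u - s| * ‖v‖) := key l s u hls hlu
      have huS : u ∈ S := by
        refine ⟨⟨by linarith, hu1⟩, ?_⟩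
        have htri : ‖h (c + u • v) - h c‖
            ≤ ‖h (c + u • v) - h (c + s • v)‖ + ‖h (c + s • v) - h c‖ :=
          norm_sub_le_norm_sub_add_norm_sub _ _ _
        calc ‖h (c + u • v) - h c‖
            ≤ L * (|u - s| * ‖v‖) + L * (s * ‖v‖) := le_trans htri (add_le_add hb hsS.2)
          _ = L * ((|u - s| + s) * ‖v‖) := by ring
          _ = L * (u * ‖v‖) := by
              rw [abs_of_nonneg (by linarith : (0:ℝ) ≤ u - s)]; ring_nf
      have : u ≤ s := le_csSup hSbdd huS
      linarith
  have hfinal := h1S.2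
  have hcv : c + (1:ℝ) • v = c' := by
    simp [hv]
  rw [hcv, one_mul] at hfinal
  calc ‖h c - h c'‖ = ‖h c' - h c‖ := norm_sub_rev _ _
    _ ≤ L * ‖v‖ := hfinal
    _ = L * ‖c - c'‖ := by rw [hv, norm_sub_rev]
end
end

section
/- Consider the linear-threshold dynamics τ ẋ = −x + [W x + d(t)]_0^m in ℝ^n, where τ > 0, W ∈ ℝ^{n×n}, m ∈ ℝ^n with m > 0, and d : ℝ_{≥0} → ℝ^n is continuous. If the initial condition satisfies 0 ≤ x(0) ≤ m (entrywise), then every solution satisfies 0 ≤ x(t) ≤ m for all t ≥ 0; that is, the box [0, m] is forward invariant. -/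
open Matrix

noncomputable section

/-- If `f` has nonnegative derivative at every point of `[0, ∞)`, then `f 0 ≤ f t` for `t ≥ 0`. -/
lemma aux_mono {f g : ℝ → ℝ} (h : ∀ t, 0 ≤ t → HasDerivAt f (g t) t)
    (hg : ∀ t, 0 ≤ t → 0 ≤ g t) : ∀ t, 0 ≤ t → f 0 ≤ f t := by
  have hmono : MonotoneOn f (Set.Ici (0:ℝ)) := by
    apply monotoneOn_of_deriv_nonneg (convex_Ici 0)
    · exact fun t ht => ((h t ht).continuousAt).continuousWithinAt
    · intro t ht
      rw [interior_Ici] at ht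
      exact ((h t ht.le).differentiableAt).differentiableWithinAt
    · intro t ht
      rw [interior_Ici] at ht
      rw [(h t ht.le).deriv]
      exact hg t ht.le
  exact fun t ht => hmono (Set.self_mem_Ici) ht ht

/-- For the linear-threshold dynamics `τ ẋ = −x + [W x + d(t)]_0^m` with a continuous input
`d`, the box `[0, m]` is forward invariant: if `0 ≤ x(0) ≤ m` entrywise, then
`0 ≤ x(t) ≤ m` for all `t ≥ 0`. -/
theorem linear_threshold_box_forward_invariant {n : ℕ}
    (τ : ℝ) (hτ : 0 < τ)
    (W : Matrix (Fin n) (Fin n) ℝ) (m : Fin n → ℝ) (hm : ∀ k, 0 < m k)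
    (d : ℝ → Fin n → ℝ) (hd : Continuous d)
    (x : ℝ → Fin n → ℝ)
    (hdyn : ∀ t, 0 ≤ t →
      HasDerivAt x (τ⁻¹ • (-x t + clamp m (W *ᵥ x t + d t))) t)
    (hx0 : ∀ k, 0 ≤ x 0 k ∧ x 0 k ≤ m k) :
    ∀ t, 0 ≤ t → ∀ k, 0 ≤ x t k ∧ x t k ≤ m k := by
  intro t ht k
  set c : ℝ → ℝ := fun s => clamp m (W *ᵥ x s + d s) k with hc
  have hc0 : ∀ s, 0 ≤ c s := fun s =>
    le_min (le_max_right _ 0) (hm k).le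
  have hcm : ∀ s, c s ≤ m k := fun s => min_le_right _ _
  -- componentwise derivative
  have hxk : ∀ s, 0 ≤ s →
      HasDerivAt (fun u => x u k) (τ⁻¹ * (-(x s k) + c s)) s := by
    intro s hs
    have := (hasDerivAt_pi.1 (hdyn s hs)) k
    simpa [Pi.smul_apply, Pi.add_apply, Pi.neg_apply] using this
  have hexp : ∀ s : ℝ, HasDerivAt (fun u : ℝ => Real.exp (u * τ⁻¹))
      (Real.exp (s * τ⁻¹) * τ⁻¹) s := by
    intro s
    simpa using ((hasDerivAt_id s).mul_const τ⁻¹).exp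
  have hepos : ∀ s : ℝ, 0 < Real.exp (s * τ⁻¹) := fun s => Real.exp_pos _
  constructor
  · -- lower bound via f s = exp(s/τ) * x s k
    have key : ∀ s, 0 ≤ s → HasDerivAt (fun u => Real.exp (u * τ⁻¹) * x u k)
        (Real.exp (s * τ⁻¹) * τ⁻¹ * c s) s := by
      intro s hs
      have := (hexp s).mul (hxk s hs)
      exact this.congr_deriv (by ring)
    have := aux_mono key (fun s hs => mul_nonneg (mul_nonneg (hepos s).le (inv_nonneg.2 hτ.le)) (hc0 s)) t ht
    have h0 : Real.exp ((0:ℝ) * τ⁻¹) * x 0 k = x 0 k := by simp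
    nlinarith [hepos t, (hx0 k).1, this]
  · -- upper bound via f s = exp(s/τ) * (m k - x s k)
    have key : ∀ s, 0 ≤ s → HasDerivAt (fun u => Real.exp (u * τ⁻¹) * (m k - x u k))
        (Real.exp (s * τ⁻¹) * τ⁻¹ * (m k - c s)) s := by
      intro s hs
      have := (hexp s).mul ((hasDerivAt_const s (m k)).sub (hxk s hs))
      exact this.congr_deriv (by simp only [Pi.sub_apply]; ring)
    have := aux_mono key (fun s hs => mul_nonneg (mul_nonneg (hepos s).le (inv_nonneg.2 hτ.le)) (sub_nonneg.2 (hcm s))) t ht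
    have h0 : Real.exp ((0:ℝ) * τ⁻¹) * (m k - x 0 k) = m k - x 0 k := by simp
    nlinarith [hepos t, (hx0 k).2, this]
end
end

section
/- Consider the task-relevant equilibrium equations of a star-connected thalamocortical network: x_i^1 = [W_{i,i}^{11} x_i^1 + W_{i,T}^{11} x_T^1 + c_i^1]_0^{m_i^1} for i = 2,…,N, together with the thalamic equation determining x_T^1. Suppose two cortical layers i, j ∈ {2,…,N} have identical task-relevant data: W_{i,i}^{11} = W_{j,j}^{11}, W_{i,T}^{11} = W_{j,T}^{11}, c_i^1 = c_j^1 and m_i^1 = m_j^1, and that ρ(|W_{i,i}^{11}|) < 1 (so that for each fixed thalamic state x_T^1 the layer fixed-point equation y = [W_{i,i}^{11} y + W_{i,T}^{11} x_T^1 + c_i^1]_0^{m_i^1} has a unique solution). Then any solution of the full equilibrium system satisfies x_i^{1*} = x_j^{1*}; i.e., the two cortical regions are remotely synchronized at equilibrium despite having no direct link. -/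
open Matrix Filter Topology
open scoped ENNReal NNReal

noncomputable section

section core

attribute [local instance] Matrix.linftyOpNormedRing Matrix.linftyOpNormedAlgebra
  Matrix.linftyOpNormedAddCommGroup Matrix.linftyOpNormedSpace

variable {n : Type*} [Fintype n] [DecidableEq n]

lemma nnnorm_map_complex (M : Matrix n n ℝ) :
    ‖M.map (fun a : ℝ => (a : ℂ))‖₊ = ‖M‖₊ := by
  rw [Matrix.linfty_opNNNorm_def, Matrix.linfty_opNNNorm_def]
  congr 1; ext i
  simp [Matrix.map_apply, Complex.nnnorm_real]

lemma key_zero [Nonempty n] (A : Matrix n n ℝ) (hA : ∀ k l, 0 ≤ A k l)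
    (hρ : specRad A < 1) (d : n → ℝ) (hd : ∀ k, 0 ≤ d k)
    (hle : ∀ k, d k ≤ (A *ᵥ d) k) : d = 0 := by
  haveI : CompleteSpace (Matrix n n ℂ) := FiniteDimensional.complete ℂ _
  set B : Matrix n n ℂ := A.map (fun a : ℝ => (a : ℂ)) with hB
  -- spectral radius bound
  have hbdd : BddAbove ((fun z : ℂ => ‖z‖) '' spectrum ℂ B) := by
    refine ⟨‖B‖, ?_⟩
    rintro - ⟨z, hz, rfl⟩
    exact spectrum.norm_le_norm_of_mem hz
  have hsr : spectralRadius ℂ B ≤ ENNReal.ofReal (specRad A) := by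
    rw [spectralRadius]
    refine iSup₂_le fun z hz => ?_
    have h1 : ‖z‖ ≤ specRad A :=
      le_csSup hbdd ⟨z, hz, rfl⟩
    calc (‖z‖₊ : ℝ≥0∞) = ENNReal.ofReal (‖z‖) := by
          rw [← ENNReal.ofReal_coe_nnreal, coe_nnnorm]
      _ ≤ _ := ENNReal.ofReal_le_ofReal h1
  -- choose r
  set r : ℝ := (max (specRad A) 0 + 1) / 2 with hr
  have hr0 : 0 ≤ r := by positivity
  have hr1 : r < 1 := by
    have : max (specRad A) 0 < 1 := max_lt hρ one_pos
    rw [hr]; linarith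
  have hsr' : spectralRadius ℂ B < ENNReal.ofReal r := by
    refine lt_of_le_of_lt hsr ?_
    rw [ENNReal.ofReal_lt_ofReal_iff (by positivity)]
    have h2 : specRad A ≤ max (specRad A) 0 := le_max_left _ _
    rw [hr]; linarith [le_max_right (specRad A) 0]
  -- Gelfand
  have hg := spectrum.pow_nnnorm_pow_one_div_tendsto_nhds_spectralRadius B
  have hev : ∀ᶠ k : ℕ in atTop, (‖B ^ k‖₊ : ℝ≥0∞) ^ (1 / (k : ℝ)) < ENNReal.ofReal r :=
    hg.eventually_lt_const hsr'
  have hnorm : ∀ᶠ k : ℕ in atTop, ‖A ^ k‖ ≤ r ^ k := by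
    filter_upwards [hev, Filter.eventually_ge_atTop 1] with k hk hk1
    have hkne : (k : ℝ) ≠ 0 := Nat.cast_ne_zero.mpr (by omega)
    have h3 : (‖B ^ k‖₊ : ℝ≥0∞) ≤ (ENNReal.ofReal r) ^ k := by
      calc (‖B ^ k‖₊ : ℝ≥0∞) = ((‖B ^ k‖₊ : ℝ≥0∞) ^ (1 / (k:ℝ))) ^ (k : ℕ) := by
            rw [← ENNReal.rpow_natCast _ k, ← ENNReal.rpow_mul,
              one_div, inv_mul_cancel₀ hkne, ENNReal.rpow_one]
        _ ≤ (ENNReal.ofReal r) ^ k := pow_le_pow_left' hk.le k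
    have hBA : ‖B ^ k‖₊ = ‖A ^ k‖₊ := by
      have : B ^ k = (A ^ k).map (fun a : ℝ => (a : ℂ)) := by
        have := map_pow (Complex.ofRealHom.mapMatrix : Matrix n n ℝ →+* Matrix n n ℂ) A k
        exact this.symm
      rw [this, nnnorm_map_complex]
    rw [hBA, ← ENNReal.ofReal_pow hr0, ← ENNReal.ofReal_coe_nnreal, coe_nnnorm,
      ENNReal.ofReal_le_ofReal_iff (by positivity)] at h3
    exact h3
  -- iterate
  have hiter : ∀ k : ℕ, ∀ a, d a ≤ ((A ^ k) *ᵥ d) a := by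
    intro k
    induction k with
    | zero => intro a; simp [Matrix.one_mulVec]
    | succ k ih =>
      intro a
      calc d a ≤ (A *ᵥ d) a := hle a
        _ ≤ (A *ᵥ ((A ^ k) *ᵥ d)) a := by
            simp only [Matrix.mulVec, dotProduct]
            exact Finset.sum_le_sum fun l _ =>
              mul_le_mul_of_nonneg_left (ih l) (hA a l)
        _ = ((A ^ (k+1)) *ᵥ d) a := by
            rw [Matrix.mulVec_mulVec, ← pow_succ']
  funext a
  have hd2 : ∀ᶠ k : ℕ in atTop, d a ≤ r ^ k * ‖d‖ := by
    filter_upwards [hnorm] with k hk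
    calc d a ≤ ((A ^ k) *ᵥ d) a := hiter k a
      _ ≤ ‖((A ^ k) *ᵥ d) a‖ := le_abs_self _
      _ ≤ ‖(A ^ k) *ᵥ d‖ := norm_le_pi_norm _ a
      _ ≤ ‖A ^ k‖ * ‖d‖ := Matrix.linfty_opNorm_mulVec _ _
      _ ≤ r ^ k * ‖d‖ := mul_le_mul_of_nonneg_right hk (norm_nonneg _)
  have hlim : Tendsto (fun k : ℕ => r ^ k * ‖d‖) atTop (𝓝 0) := by
    simpa using (tendsto_pow_atTop_nhds_zero_of_lt_one hr0 hr1).mul_const ‖d‖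
  have : d a ≤ 0 := ge_of_tendsto hlim hd2
  exact le_antisymm this (hd a)

lemma clamp_fixed_unique (A : Matrix n n ℝ) (b m y y' : n → ℝ)
    (hρ : specRad (eAbs A) < 1)
    (hy : y = clamp m (A *ᵥ y + b)) (hy' : y' = clamp m (A *ᵥ y' + b)) : y = y' := by
  cases isEmpty_or_nonempty n
  · exact Subsingleton.elim y y'
  set d : n → ℝ := fun k => |y k - y' k| with hd
  have hle : ∀ k, d k ≤ ((eAbs A) *ᵥ d) k := by
    intro k
    have h1 : d k = |clamp m (A *ᵥ y + b) k - clamp m (A *ᵥ y' + b) k| := by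
      rw [hd]; simp only; rw [← hy, ← hy']
    rw [h1]
    unfold clamp
    calc |min (max ((A *ᵥ y + b) k) 0) (m k) - min (max ((A *ᵥ y' + b) k) 0) (m k)|
        ≤ max |max ((A *ᵥ y + b) k) 0 - max ((A *ᵥ y' + b) k) 0| |m k - m k| :=
          abs_min_sub_min_le_max _ _ _ _
      _ ≤ |(A *ᵥ y + b) k - (A *ᵥ y' + b) k| := by
          rw [sub_self, abs_zero]
          exact max_le (abs_max_sub_max_le_abs _ _ _) (abs_nonneg _)
      _ = |∑ l, A k l * (y l - y' l)| := by
          simp [Matrix.mulVec, dotProduct, Finset.sum_sub_distrib, mul_sub]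
      _ ≤ ∑ l, |A k l * (y l - y' l)| := Finset.abs_sum_le_sum_abs _ _
      _ = ((eAbs A) *ᵥ d) k := by
          simp [Matrix.mulVec, dotProduct, eAbs, abs_mul, hd]
  have hzero : d = 0 := key_zero (eAbs A) (fun k l => abs_nonneg _) hρ d
    (fun k => abs_nonneg _) hle
  funext a
  have : d a = 0 := by rw [hzero]; rfl
  have := abs_eq_zero.mp this
  linarith [sub_eq_zero.mp this]

end core

/-- Remote synchronization in star-connected thalamocortical networks: if two cortical
layers `i` and `j` have identical task-relevant data (`W_{i,i}^{11} = W_{j,j}^{11}`,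
`W_{i,T}^{11} = W_{j,T}^{11}`, `c_i^1 = c_j^1`, `m_i^1 = m_j^1`) and
`ρ(|W_{i,i}^{11}|) < 1`, then any solution of the full task-relevant equilibrium system
satisfies `x_i^{1*} = x_j^{1*}`. -/
theorem remote_synchronization_star_network {N : ℕ} (s : ℕ → ℕ) (sT : ℕ)
    (i j : ℕ) (hi2 : 2 ≤ i) (hiN : i ≤ N) (hj2 : 2 ≤ j) (hjN : j ≤ N)
    (hsij : s i = s j)
    (W11 : (l : ℕ) → Matrix (Fin (s l)) (Fin (s l)) ℝ)
    (W1T : (l : ℕ) → Matrix (Fin (s l)) (Fin sT) ℝ)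
    (c1 : (l : ℕ) → Fin (s l) → ℝ) (m1 : (l : ℕ) → Fin (s l) → ℝ)
    (WT : Matrix (Fin sT) (Fin sT) ℝ)
    (WT1 : (l : ℕ) → Matrix (Fin sT) (Fin (s l)) ℝ)
    (cT mT : Fin sT → ℝ)
    (hm : ∀ l kk, 0 < m1 l kk) (hmT : ∀ kk, 0 < mT kk)
    -- identical task-relevant data of the layers i and j
    (hWeq : ∀ (a b : Fin (s i)), W11 i a b = W11 j (Fin.cast hsij a) (Fin.cast hsij b))
    (hWTeq : ∀ (a : Fin (s i)) (l : Fin sT), W1T i a l = W1T j (Fin.cast hsij a) l)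
    (hceq : ∀ a : Fin (s i), c1 i a = c1 j (Fin.cast hsij a))
    (hmeq : ∀ a : Fin (s i), m1 i a = m1 j (Fin.cast hsij a))
    -- uniqueness of the layer fixed point for each fixed thalamic state
    (hρ : specRad (eAbs (W11 i)) < 1)
    -- a solution of the full task-relevant equilibrium system
    (x1 : (l : ℕ) → Fin (s l) → ℝ) (xT1 : Fin sT → ℝ)
    (hlayer : ∀ l, 2 ≤ l → l ≤ N →
      x1 l = clamp (m1 l) (W11 l *ᵥ x1 l + W1T l *ᵥ xT1 + c1 l))
    (hthal : xT1 = clamp mT (WT *ᵥ xT1 + (∑ l ∈ Finset.Icc 1 N, WT1 l *ᵥ x1 l) + cT)) :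
    ∀ a : Fin (s i), x1 i a = x1 j (Fin.cast hsij a) := by
  have hyfix : x1 i = clamp (m1 i) (W11 i *ᵥ x1 i + (W1T i *ᵥ xT1 + c1 i)) := by
    rw [← add_assoc]; exact hlayer i hi2 hiN
  have hy'fix : (fun a => x1 j (Fin.cast hsij a)) =
      clamp (m1 i) (W11 i *ᵥ (fun a => x1 j (Fin.cast hsij a)) + (W1T i *ᵥ xT1 + c1 i)) := by
    have hj := hlayer j hj2 hjN
    funext a
    have h1 : x1 j (Fin.cast hsij a)
        = clamp (m1 j) (W11 j *ᵥ x1 j + W1T j *ᵥ xT1 + c1 j) (Fin.cast hsij a) :=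
      congrFun hj (Fin.cast hsij a)
    rw [h1]
    unfold clamp
    have hW : (W11 i *ᵥ (fun a => x1 j (Fin.cast hsij a))) a
        = (W11 j *ᵥ x1 j) (Fin.cast hsij a) := by
      simp only [Matrix.mulVec, dotProduct]
      refine Fintype.sum_equiv (finCongr hsij) _ _ fun bb => ?_
      rw [finCongr_apply, hWeq]
    have hWT : (W1T i *ᵥ xT1) a = (W1T j *ᵥ xT1) (Fin.cast hsij a) := by
      simp only [Matrix.mulVec, dotProduct]
      exact Finset.sum_congr rfl fun l _ => by rw [hWTeq]
    simp only [Pi.add_apply]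
    rw [hW, hWT, hceq, hmeq, add_assoc]
  have hfin := clamp_fixed_unique (W11 i) (W1T i *ᵥ xT1 + c1 i) (m1 i)
    (x1 i) (fun a => x1 j (Fin.cast hsij a)) hρ hyfix hy'fix
  intro a
  exact congrFun hfin a
end
end

section
/- Consider a layer with linear-threshold dynamics τ ẋ = −x + [W x + w(t) + B u(t) + c]_0^m, where x = (x^0, x^1) ∈ ℝ^{r} × ℝ^{n−r} is the partition into task-irrelevant and task-relevant components, W is partitioned accordingly with W^{0,all} = [W^{00} W^{01}] its top block row, B = [B^0; 0] with B^0 ∈ ℝ^{r×p} of full rank and p ≥ r, w : ℝ_{≥0} → ℝ^n is a continuous interconnection input, and 0 ≤ x(0) ≤ m. Suppose the feedback-feedforward control u(t) = K x(t) + ū(t) satisfies the entrywise inequalities B^0 K ≤ −W^{0,all} and B^0 ū(t) ≤ −w^0(t) − c^0 for all t ≥ 0 (where w^0 and c^0 are the task-irrelevant blocks of w and c). Then the closed-loop task-irrelevant dynamics reduces to τ ẋ^0 = −x^0, so that x^0(t) = e^{−t/τ} x^0(0) and the task-irrelevant states converge exponentially to zero. -/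
open Matrix

noncomputable section

/-- Selective inhibition of the task-irrelevant components of one layer.  The state is
partitioned as `x = (x^0, x^1)` (indices `Sum.inl` are task-irrelevant, `Sum.inr` are
task-relevant).  If the feedback-feedforward control `u(t) = K x(t) + ū(t)` satisfies
`B^0 K ≤ −W^{0,all}` and `B^0 ū(t) ≤ −w^0(t) − c^0` entrywise, then the closed-loop
task-irrelevant dynamics reduces to `τ ẋ^0 = −x^0`, whence `x^0(t) = e^{−t/τ} x^0(0)`. -/
theorem feedback_feedforward_inhibition {r q pdim : ℕ}
    (τ : ℝ) (hτ : 0 < τ)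
    (W : Matrix (Fin r ⊕ Fin q) (Fin r ⊕ Fin q) ℝ)
    (B : Matrix (Fin r ⊕ Fin q) (Fin pdim) ℝ)
    (hBlow : ∀ (k : Fin q) (l : Fin pdim), B (Sum.inr k) l = 0)
    (hBrank : (Matrix.of fun (k : Fin r) (l : Fin pdim) => B (Sum.inl k) l).rank = r)
    (hpr : r ≤ pdim)
    (w : ℝ → (Fin r ⊕ Fin q) → ℝ) (hw : Continuous w)
    (c m : (Fin r ⊕ Fin q) → ℝ) (hm : ∀ kk, 0 < m kk)
    (K : Matrix (Fin pdim) (Fin r ⊕ Fin q) ℝ)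
    (ubar : ℝ → Fin pdim → ℝ)
    (hK : ∀ (k : Fin r) (l : Fin r ⊕ Fin q),
      ((Matrix.of fun (kk : Fin r) (ll : Fin pdim) => B (Sum.inl kk) ll) * K) k l
        ≤ -W (Sum.inl k) l)
    (hu : ∀ t, 0 ≤ t → ∀ k : Fin r,
      ((Matrix.of fun (kk : Fin r) (ll : Fin pdim) => B (Sum.inl kk) ll) *ᵥ ubar t) k
        ≤ -(w t (Sum.inl k)) - c (Sum.inl k))
    (x : ℝ → (Fin r ⊕ Fin q) → ℝ)
    (hx0 : ∀ kk, 0 ≤ x 0 kk ∧ x 0 kk ≤ m kk)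
    (hdyn : ∀ t, 0 ≤ t → HasDerivAt x
      (τ⁻¹ • (-x t + clamp m (W *ᵥ x t + w t + B *ᵥ (K *ᵥ x t + ubar t) + c))) t) :
    (∀ t, 0 ≤ t → ∀ k : Fin r,
      HasDerivAt (fun tt => x tt (Sum.inl k)) (-(x t (Sum.inl k)) / τ) t) ∧
    (∀ t, 0 ≤ t → ∀ k : Fin r,
      x t (Sum.inl k) = Real.exp (-t / τ) * x 0 (Sum.inl k)) := by
  -- component derivatives
  have hcomp : ∀ t, 0 ≤ t → ∀ kk, HasDerivAt (fun tt => x tt kk)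
      (τ⁻¹ * (-(x t kk) + clamp m (W *ᵥ x t + w t + B *ᵥ (K *ᵥ x t + ubar t) + c) kk)) t := by
    intro t ht kk
    have := hasDerivAt_pi.1 (hdyn t ht) kk
    simpa [Pi.smul_apply, Pi.add_apply, Pi.neg_apply, smul_eq_mul] using this
  have hclamp_nonneg : ∀ (v : (Fin r ⊕ Fin q) → ℝ) kk, 0 ≤ clamp m v kk := by
    intro v kk
    exact le_min (le_max_right _ _) (hm kk).le
  -- nonnegativity of all components for t ≥ 0
  have hnonneg : ∀ t, 0 ≤ t → ∀ kk, 0 ≤ x t kk := by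
    intro t ht kk
    set f : ℝ → ℝ := fun tt => Real.exp (tt / τ) * x tt kk with hf
    have hfd : ∀ s, 0 ≤ s → HasDerivAt f
        (Real.exp (s / τ) * (τ⁻¹ * clamp m (W *ᵥ x s + w s + B *ᵥ (K *ᵥ x s + ubar s) + c) kk)) s := by
      intro s hs
      have h1 : HasDerivAt (fun tt => Real.exp (tt / τ)) (Real.exp (s / τ) * τ⁻¹) s := by
        have := ((hasDerivAt_id s).div_const τ).exp
        simpa [div_eq_mul_inv] using this
      have h2 := hcomp s hs kk
      have := h1.mul h2
      convert this using 1
      · rfl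
      · rfl
      · rfl
      · ring
    have hmono : MonotoneOn f (Set.Ici (0:ℝ)) := by
      apply monotoneOn_of_deriv_nonneg (convex_Ici 0)
      · intro s hs
        exact ((hfd s hs).continuousAt).continuousWithinAt
      · intro s hs
        rw [interior_Ici] at hs
        exact ((hfd s (le_of_lt hs)).differentiableAt).differentiableWithinAt
      · intro s hs
        rw [interior_Ici] at hs
        rw [(hfd s (le_of_lt hs)).deriv]
        exact mul_nonneg (Real.exp_pos _).le
          (mul_nonneg (inv_nonneg.2 hτ.le) (hclamp_nonneg _ _))
    have h0 : f 0 ≤ f t := hmono Set.self_mem_Ici ht ht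
    have hf0 : 0 ≤ f 0 := by
      simp only [hf, zero_div, Real.exp_zero, one_mul]
      exact (hx0 kk).1
    have : 0 ≤ f t := le_trans hf0 h0
    have hpos : 0 < Real.exp (t / τ) := Real.exp_pos _
    exact le_of_not_gt fun hlt =>
      absurd this (not_le.2 (mul_neg_of_pos_of_neg hpos hlt))
  -- the clamp vanishes on the task-irrelevant rows
  have hclamp0 : ∀ t, 0 ≤ t → ∀ k : Fin r,
      clamp m (W *ᵥ x t + w t + B *ᵥ (K *ᵥ x t + ubar t) + c) (Sum.inl k) = 0 := by
    intro t ht k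
    have hB0K : ∀ j, ((Matrix.of fun (kk : Fin r) (ll : Fin pdim) => B (Sum.inl kk) ll) * K) k j * x t j
        ≤ -W (Sum.inl k) j * x t j := by
      intro j
      exact mul_le_mul_of_nonneg_right (hK k j) (hnonneg t ht j)
    have harg : (W *ᵥ x t + w t + B *ᵥ (K *ᵥ x t + ubar t) + c) (Sum.inl k) ≤ 0 := by
      have hBsplit : (B *ᵥ (K *ᵥ x t + ubar t)) (Sum.inl k)
          = (((Matrix.of fun (kk : Fin r) (ll : Fin pdim) => B (Sum.inl kk) ll) * K) *ᵥ x t) k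
            + ((Matrix.of fun (kk : Fin r) (ll : Fin pdim) => B (Sum.inl kk) ll) *ᵥ ubar t) k := by
        rw [← Matrix.mulVec_mulVec]
        simp [mulVec, dotProduct, Pi.add_apply, mul_add, Finset.sum_add_distrib]
      have h1 : (((Matrix.of fun (kk : Fin r) (ll : Fin pdim) => B (Sum.inl kk) ll) * K) *ᵥ x t) k
          ≤ -((W *ᵥ x t) (Sum.inl k)) := by
        have hR : -((W *ᵥ x t) (Sum.inl k)) = ∑ j, -W (Sum.inl k) j * x t j := by
          simp [mulVec, dotProduct, neg_mul, Finset.sum_neg_distrib]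
        rw [hR]
        simp only [mulVec, dotProduct]
        exact Finset.sum_le_sum fun j _ => hB0K j
      have h2 := hu t ht k
      simp only [Pi.add_apply, hBsplit]
      linarith
    simp only [clamp]
    rw [max_eq_right harg, min_eq_left (hm _).le]
  -- first conclusion
  have hderiv : ∀ t, 0 ≤ t → ∀ k : Fin r,
      HasDerivAt (fun tt => x tt (Sum.inl k)) (-(x t (Sum.inl k)) / τ) t := by
    intro t ht k
    have := hcomp t ht (Sum.inl k)
    rw [hclamp0 t ht k] at this
    convert this using 1
    rw [add_zero]
    ring
  refine ⟨hderiv, ?_⟩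
  intro t ht k
  set g : ℝ → ℝ := fun tt => Real.exp (tt / τ) * x tt (Sum.inl k) with hg
  have hgd : ∀ s ∈ Set.Ico (0:ℝ) t, HasDerivWithinAt g 0 (Set.Ici s) s := by
    intro s hs
    have h1 : HasDerivAt (fun tt => Real.exp (tt / τ)) (Real.exp (s / τ) * τ⁻¹) s := by
      have := ((hasDerivAt_id s).div_const τ).exp
      simpa [div_eq_mul_inv] using this
    have h2 := hderiv s hs.1 k
    have h3 := h1.mul h2
    have h4 : Real.exp (s / τ) * τ⁻¹ * x s (Sum.inl k)
        + Real.exp (s / τ) * (-(x s (Sum.inl k)) / τ) = 0 := by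
      field_simp
      ring
    rw [h4] at h3
    exact h3.hasDerivWithinAt
  have hgc : ContinuousOn g (Set.Icc 0 t) := by
    intro s hs
    refine (ContinuousAt.continuousWithinAt ?_)
    have h1 : HasDerivAt (fun tt => Real.exp (tt / τ)) (Real.exp (s / τ) * τ⁻¹) s := by
      have := ((hasDerivAt_id s).div_const τ).exp
      simpa [div_eq_mul_inv] using this
    exact (h1.mul (hderiv s hs.1 k)).continuousAt
  have hconst := constant_of_has_deriv_right_zero hgc hgd t (Set.right_mem_Icc.2 ht)
  have hval : Real.exp (t / τ) * x t (Sum.inl k) = Real.exp (0 / τ) * x 0 (Sum.inl k) := hconst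
  rw [zero_div, Real.exp_zero, one_mul] at hval
  rw [neg_div, Real.exp_neg, ← hval, inv_mul_cancel_left₀ (Real.exp_ne_zero _)]
end
end
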